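/- arXiv:2509.13041 — 2 statements merged into one kernel-verified Lean document; each statement's English description precedes it below -/
import Mathlib

section
/- Let ν ∈ 𝒫₁(ℝ) be symmetric about its barycenter x (i.e. the reflection y ↦ 2x − y maps ν to itself) and ν ≠ δ_x. Then ν is 1/2-biased around x, but for every β > 1/2, ν is not β-biased around x. -/
open MeasureTheory ProbabilityTheory Set

noncomputable section

/-- Topological support of a measure on `ℝ`: points all of whose neighborhoods have
positive measure. -/
def msupp (ν : Measure ℝ) : Set ℝ := {x : ℝ | ∀ ε > 0, 0 < ν (Metric.ball x ε)}

/-- `S(ν)`, the supremum of the support. -/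
def Ssup (ν : Measure ℝ) : ℝ := sSup (msupp ν)

/-- `s(ν)`, the infimum of the support. -/
def sinf (ν : Measure ℝ) : ℝ := sInf (msupp ν)

/-- Barycenter of a finite measure. -/
def barOf (ν : Measure ℝ) : ℝ := (∫ y, y ∂ν) / (ν Set.univ).toReal

/-- A probability measure centered at `0` is simple `β`-biased if its restriction to
`[0,∞)` is a single atom of mass at least `β`. -/
def IsSimpleBiased (β : ℝ) (ν : Measure ℝ) : Prop :=
  IsProbabilityMeasure ν ∧ Integrable id ν ∧ (∫ y, y ∂ν) = 0 ∧
  ∃ M : ℝ, 0 ≤ M ∧ ν.restrict (Set.Ici 0) = ν {M} • Measure.dirac M ∧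
    ENNReal.ofReal β ≤ ν {M}

/-- A probability measure centered at `0` is atomic `β`-biased if its support is bounded
above and it has an atom of mass at least `β` at the maximum of its support. -/
def IsAtomicBiased (β : ℝ) (ν : Measure ℝ) : Prop :=
  IsProbabilityMeasure ν ∧ Integrable id ν ∧ (∫ y, y ∂ν) = 0 ∧
  BddAbove (msupp ν) ∧ ENNReal.ofReal β ≤ ν {Ssup ν}

/-- `ν` is a mixture of measures satisfying `P`. -/
def IsMixtureOf (ν : Measure ℝ) (P : Measure ℝ → Prop) : Prop :=
  ∃ ρ : Measure ℝ, IsProbabilityMeasure ρ ∧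
    ∃ κ : ProbabilityTheory.Kernel ℝ ℝ, IsMarkovKernel κ ∧
      (∀ x : ℝ, P (κ x)) ∧ ν = ρ.bind (fun x => κ x)

/-- `β`-biased probability measure (centered at `0`). -/
def IsBiased (β : ℝ) (ν : Measure ℝ) : Prop := IsMixtureOf ν (IsAtomicBiased β)

/-- `β`-biased around `x`. -/
def IsBiasedAround (β x : ℝ) (ν : Measure ℝ) : Prop :=
  IsBiased β (ν.map (fun y => y - x))

/-- Strongly `β`-biased probability measure (centered at `0`). -/
def IsStronglyBiased (β : ℝ) (ν : Measure ℝ) : Prop :=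
  ∃ ρ : Measure ℝ, IsProbabilityMeasure ρ ∧
    ∃ κ : ProbabilityTheory.Kernel ℝ ℝ, IsMarkovKernel κ ∧
      ∃ γ : ℝ → ℝ, (∀ x : ℝ, β < γ x ∧ IsSimpleBiased (γ x) (κ x)) ∧
        ν = ρ.bind (fun x => κ x)

/-- Strongly `β`-biased around `x`. -/
def IsStronglyBiasedAround (β x : ℝ) (ν : Measure ℝ) : Prop :=
  IsStronglyBiased β (ν.map (fun y => y - x))

/-- Convex order between finite measures on `ℝ`. -/
def ConvexOrder (μ ν : Measure ℝ) : Prop :=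
  ∀ φ : ℝ → ℝ, ConvexOn ℝ Set.univ φ → Integrable φ μ → Integrable φ ν →
    ∫ y, φ y ∂μ ≤ ∫ y, φ y ∂ν

/-- The distorted reflection `R^β`. -/
def Rbeta (β : ℝ) : ℝ → ℝ := fun x =>
  if 0 ≤ x then -(β / (1 - β)) * x else -((1 - β) / β) * x

/-- The transform `Z^β`. -/
def Zbeta (β : ℝ) (f : ℝ → ℝ) : ℝ → ℝ := fun x =>
  if 0 < x then ((1 - β) / β) * f ((β / (1 - β)) * x) else f x

/-- The `β`-biased order `μ ≼_β ν`: existence of a kernel `κ` with `ν = μ.bind κ` such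
that `κ x` is `β`-biased around `x` for `μ`-a.e. `x`. -/
def BiasedOrder (β : ℝ) (μ ν : Measure ℝ) : Prop :=
  ∃ κ : ProbabilityTheory.Kernel ℝ ℝ, IsMarkovKernel κ ∧
    (∀ᵐ x ∂μ, IsBiasedAround β x (κ x)) ∧ ν = μ.bind (fun x => κ x)

/-- The strong `β`-biased order `μ ≼_{sβ} ν`. -/
def StrongBiasedOrder (β : ℝ) (μ ν : Measure ℝ) : Prop :=
  ∃ κ : ProbabilityTheory.Kernel ℝ ℝ, IsMarkovKernel κ ∧
    (∀ᵐ x ∂μ, IsStronglyBiasedAround β x (κ x)) ∧ ν = μ.bind (fun x => κ x)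

/-- The 1-Wasserstein distance between probability measures on `ℝ`. -/
def W1 (μ ν : Measure ℝ) : ℝ :=
  sInf {c : ℝ | ∃ π : Measure (ℝ × ℝ), IsProbabilityMeasure π ∧
    π.map Prod.fst = μ ∧ π.map Prod.snd = ν ∧
    Integrable (fun p => |p.1 - p.2|) π ∧ c = ∫ p, |p.1 - p.2| ∂π}

/-- `η` is a regular conditional law of `X` given the sub-σ-algebra `m₀`. -/
def IsCondLaw {Ω : Type*} [mΩ : MeasurableSpace Ω] (m₀ : MeasurableSpace Ω)
    (P : Measure Ω) (X : Ω → ℝ) (η : Ω → Measure ℝ) : Prop :=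
  (∀ ω, IsProbabilityMeasure (η ω)) ∧
  ∀ B : Set ℝ, MeasurableSet B →
    (fun ω => (η ω B).toReal) =ᵐ[P] P[(X ⁻¹' B).indicator (fun _ => (1 : ℝ))|m₀]


section Aux

open scoped ENNReal

lemma msupp_compl_null (η : Measure ℝ) : η (msupp η)ᶜ = 0 := by
  apply measure_null_of_locally_null
  intro z hz
  simp only [msupp, mem_compl_iff, mem_setOf_eq] at hz
  push_neg at hz
  obtain ⟨ε, hε, h0⟩ := hz
  exact ⟨Metric.ball z ε, mem_nhdsWithin_of_mem_nhds (Metric.ball_mem_nhds z hε),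
    le_antisymm h0 zero_le⟩

lemma ae_le_Ssup (η : Measure ℝ) (hbdd : BddAbove (msupp η)) :
    ∀ᵐ y ∂η, y ≤ Ssup η := by
  rw [ae_iff]
  refine measure_mono_null ?_ (msupp_compl_null η)
  intro y hy
  simp only [mem_setOf_eq, not_le] at hy
  intro hmem
  exact absurd (le_csSup hbdd hmem) (not_le.mpr hy)

lemma atomic_biased_ineq {β : ℝ} (hβ : 1 / 2 < β) {η : Measure ℝ}
    (h : IsAtomicBiased β η) :
    η (Iio 0) ≤ ENNReal.ofReal ((1 - β) / β) * η (Ioi 0) := by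
  obtain ⟨hp, hi, hz, hbdd, hatom⟩ := h
  have hβ0 : 0 < β := by linarith
  set S := Ssup η with hSdef
  have haeS : ∀ᵐ y ∂η, y ≤ S := ae_le_Ssup η hbdd
  have hS0 : 0 ≤ S := by
    have h1 : ∫ y, y ∂η ≤ ∫ _, S ∂η := integral_mono_ae hi (integrable_const S) haeS
    rw [hz, integral_const] at h1
    simpa using h1
  rcases eq_or_lt_of_le hS0 with hS0' | hSpos
  · -- S = 0 : η (Iio 0) = 0
    have hae0 : ∀ᵐ y ∂η, y = 0 := by
      have hnn : 0 ≤ᵐ[η] (fun y => -y) := by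
        filter_upwards [haeS] with y hy
        simp only [Pi.zero_apply, neg_nonneg]
        exact hy.trans_eq hS0'.symm
      have hiz : ∫ y, -y ∂η = 0 := by
        rw [integral_neg]
        simpa [Function.id_def] using congrArg Neg.neg hz
      have := (integral_eq_zero_iff_of_nonneg_ae hnn hi.neg).mp hiz
      filter_upwards [this] with y hy
      simpa using hy
    have hIio : η (Iio 0) = 0 := by
      refine measure_mono_null ?_ (ae_iff.mp hae0)
      intro y hy
      simp only [mem_setOf_eq]
      exact ne_of_lt hy
    simp [hIio]
  · -- S > 0
    have hsub : ({S} : Set ℝ) ⊆ Ioi 0 := by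
      intro y hy
      simp only [mem_singleton_iff] at hy
      simpa [hy] using hSpos
    have hatomle : η {S} ≤ η (Ioi 0) := measure_mono hsub
    have hdisj : η (Iio 0) + ENNReal.ofReal β ≤ 1 := by
      calc η (Iio 0) + ENNReal.ofReal β ≤ η (Iio 0) + η {S} := by gcongr
        _ = η (Iio 0 ∪ {S}) := by
            rw [measure_union ?_ (measurableSet_singleton S)]
            simp only [disjoint_singleton_right, mem_Iio, not_lt]
            exact hSpos.le
        _ ≤ η univ := measure_mono (subset_univ _)
        _ = 1 := measure_univ
    have h2 : η (Iio 0) ≤ ENNReal.ofReal (1 - β) := by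
      have h3 := (ENNReal.cancel_of_ne ENNReal.ofReal_ne_top).le_tsub_of_add_le_right hdisj
      rwa [← ENNReal.ofReal_one, ← ENNReal.ofReal_sub _ hβ0.le] at h3
    rcases le_or_gt β 1 with hβ1 | hβ1
    · calc η (Iio 0) ≤ ENNReal.ofReal (1 - β) := h2
        _ = ENNReal.ofReal ((1 - β) / β) * ENNReal.ofReal β := by
            rw [← ENNReal.ofReal_mul (div_nonneg (by linarith) hβ0.le)]
            rw [div_mul_cancel₀ _ hβ0.ne']
        _ ≤ ENNReal.ofReal ((1 - β) / β) * η (Ioi 0) := by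
            gcongr
            exact hatom.trans hatomle
    · have hz' : η (Iio 0) = 0 := by
        refine le_antisymm (h2.trans_eq ?_) zero_le
        rw [ENNReal.ofReal_eq_zero]
        linarith
      simp [hz']

/-- The symmetric two-point kernel `y ↦ ½δ_y + ½δ_{-y}`. -/
def symK : Kernel ℝ ℝ :=
  ⟨fun y => (1 / 2 : ℝ≥0∞) • Measure.dirac y + (1 / 2 : ℝ≥0∞) • Measure.dirac (-y), by
    apply Measure.measurable_of_measurable_coe
    intro s hs
    simp only [Measure.coe_add, Measure.coe_smul, Pi.add_apply, Pi.smul_apply,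
      Measure.dirac_apply' _ hs, smul_eq_mul]
    exact ((measurable_one.indicator hs).comp measurable_id).const_mul _ |>.add
      (((measurable_one.indicator hs).comp measurable_neg).const_mul _)⟩

lemma symK_apply (y : ℝ) :
    symK y = (1 / 2 : ℝ≥0∞) • Measure.dirac y + (1 / 2 : ℝ≥0∞) • Measure.dirac (-y) := rfl

lemma symK_prob (y : ℝ) : IsProbabilityMeasure (symK y) := by
  constructor
  rw [symK_apply]
  simp [ENNReal.inv_two_add_inv_two]

lemma msupp_symK (y : ℝ) : msupp (symK y) = {y, -y} := by
  ext z
  simp only [msupp, mem_setOf_eq, mem_insert_iff, mem_singleton_iff]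
  constructor
  · intro h
    by_contra hne
    push_neg at hne
    obtain ⟨h1, h2⟩ := hne
    set ε := min (dist z y) (dist z (-y)) with hε
    have hεpos : 0 < ε := lt_min (dist_pos.mpr h1) (dist_pos.mpr h2)
    have hy : y ∉ Metric.ball z ε := by
      simp only [Metric.mem_ball, not_lt, hε]
      exact (min_le_left _ _).trans (dist_comm z y ▸ le_refl _)
    have hny : -y ∉ Metric.ball z ε := by
      simp only [Metric.mem_ball, not_lt, hε]
      exact (min_le_right _ _).trans (dist_comm z (-y) ▸ le_refl _)
    have := h ε hεpos
    rw [symK_apply] at this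
    simp only [Measure.coe_add, Measure.coe_smul, Pi.add_apply, Pi.smul_apply,
      smul_eq_mul, Measure.dirac_apply' _ Metric.isOpen_ball.measurableSet,
      indicator_of_notMem hy, indicator_of_notMem hny] at this
    simp at this
  · intro h ε hε
    rw [symK_apply]
    simp only [Measure.coe_add, Measure.coe_smul, Pi.add_apply, Pi.smul_apply, smul_eq_mul]
    rcases h with h | h
    · subst h
      have h1 : (Measure.dirac z) (Metric.ball z ε) = 1 :=
        Measure.dirac_apply_of_mem (Metric.mem_ball_self hε)
      rw [h1]
      exact lt_of_lt_of_le (by norm_num) (self_le_add_right _ _)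
    · subst h
      have h1 : (Measure.dirac (-y)) (Metric.ball (-y) ε) = 1 :=
        Measure.dirac_apply_of_mem (Metric.mem_ball_self hε)
      rw [h1]
      exact lt_of_lt_of_le (by norm_num) (self_le_add_left _ _)

lemma integrable_id_dirac (a : ℝ) : Integrable id (Measure.dirac a) := by
  refine (integrable_const a).congr ?_
  rw [Filter.EventuallyEq, ae_dirac_eq]
  exact Filter.eventually_pure.mpr rfl

lemma ofReal_half : ENNReal.ofReal (1 / 2) = 1 / 2 := by
  rw [ENNReal.ofReal_div_of_pos two_pos]
  norm_num

lemma symK_atomic (y : ℝ) : IsAtomicBiased (1 / 2) (symK y) := by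
  have hhalf : (1 / 2 : ℝ≥0∞) ≠ ⊤ := by norm_num
  have h1 : Integrable id ((1 / 2 : ℝ≥0∞) • Measure.dirac y) :=
    (integrable_id_dirac y).smul_measure hhalf
  have h2 : Integrable id ((1 / 2 : ℝ≥0∞) • Measure.dirac (-y)) :=
    (integrable_id_dirac (-y)).smul_measure hhalf
  refine ⟨symK_prob y, ?_, ?_, ?_, ?_⟩
  · rw [symK_apply]
    exact h1.add_measure h2
  · rw [symK_apply]
    have : ∫ z, z ∂((1 / 2 : ℝ≥0∞) • Measure.dirac y + (1 / 2 : ℝ≥0∞) • Measure.dirac (-y))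
        = ∫ z, id z ∂((1 / 2 : ℝ≥0∞) • Measure.dirac y + (1 / 2 : ℝ≥0∞) • Measure.dirac (-y)) :=
      rfl
    rw [this, integral_add_measure h1 h2, integral_smul_measure, integral_smul_measure,
      integral_dirac, integral_dirac]
    simp [smul_neg]
  · rw [msupp_symK]
    exact ((Set.finite_singleton (-y)).insert y).bddAbove
  · have hS : Ssup (symK y) = |y| := by
      rw [Ssup, msupp_symK, csSup_pair]
      rcases le_total 0 y with h | h
      · rw [sup_eq_left.mpr (by linarith), abs_of_nonneg h]
      · rw [sup_eq_right.mpr (by linarith), abs_of_nonpos h]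
    rw [hS, ofReal_half, symK_apply]
    simp only [Measure.coe_add, Measure.coe_smul, Pi.add_apply, Pi.smul_apply, smul_eq_mul]
    rcases le_total 0 y with h | h
    · have : (Measure.dirac y) {|y|} = 1 :=
        Measure.dirac_apply_of_mem (by simp [abs_of_nonneg h])
      calc (1 / 2 : ℝ≥0∞) = 1 / 2 * 1 := by rw [mul_one]
        _ ≤ _ := by rw [this]; exact le_add_of_nonneg_right zero_le
    · have : (Measure.dirac (-y)) {|y|} = 1 :=
        Measure.dirac_apply_of_mem (by simp [abs_of_nonpos h])
      calc (1 / 2 : ℝ≥0∞) = 1 / 2 * 1 := by rw [mul_one]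
        _ ≤ _ := by rw [this]; exact le_add_of_nonneg_left zero_le

end Aux

open scoped ENNReal

/-- a measure symmetric about its barycenter `x`, different from `δ_x`,
is `1/2`-biased around `x` but not `β`-biased around `x` for any `β > 1/2`. -/
theorem stmt6 (x : ℝ) (ν : Measure ℝ) (hprob : IsProbabilityMeasure ν)
    (hint : Integrable id ν) (hbar : (∫ y, y ∂ν) = x)
    (hsym : ν.map (fun y => 2 * x - y) = ν) (hne : ν ≠ Measure.dirac x) :
    IsBiasedAround (1 / 2) x ν ∧
      ∀ β : ℝ, 1 / 2 < β → ¬ IsBiasedAround β x ν := by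
  have hmx : Measurable (fun y : ℝ => y - x) := measurable_id.sub_const x
  set μ : Measure ℝ := ν.map (fun y => y - x) with hμdef
  have hμprob : IsProbabilityMeasure μ := Measure.isProbabilityMeasure_map hmx.aemeasurable
  have hμsym : μ.map (fun y : ℝ => -y) = μ := by
    have e1 : μ.map (fun y : ℝ => -y) = ν.map (fun y => x - y) := by
      rw [hμdef, Measure.map_map measurable_neg hmx]
      congr 1
      funext y
      simp only [Function.comp_apply]
      ring
    have e2 : ν.map (fun y : ℝ => x - y) = μ := by
      rw [hμdef]
      conv_rhs => rw [← hsym]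
      rw [Measure.map_map hmx (show Measurable fun y : ℝ => 2 * x - y by fun_prop)]
      congr 1
      funext y
      simp only [Function.comp_apply]
      ring
    rw [e1, e2]
  constructor
  · -- ν is 1/2-biased around x
    unfold IsBiasedAround IsBiased IsMixtureOf
    refine ⟨μ, hμprob, symK, ⟨fun y => symK_prob y⟩, fun y => symK_atomic y, ?_⟩
    refine Measure.ext fun s hs => ?_
    rw [Measure.bind_apply hs symK.measurable.aemeasurable]
    have hind : ∀ y : ℝ, symK y s
        = (1 / 2 : ℝ≥0∞) * s.indicator 1 y + (1 / 2 : ℝ≥0∞) * s.indicator 1 (-y) := by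
      intro y
      rw [symK_apply]
      simp [Measure.dirac_apply' _ hs]
    simp_rw [hind]
    have hmInd : Measurable (s.indicator (1 : ℝ → ℝ≥0∞)) := measurable_one.indicator hs
    rw [lintegral_add_left (hmInd.const_mul _),
      lintegral_const_mul _ hmInd,
      lintegral_const_mul _ (show Measurable fun a : ℝ => s.indicator (1 : ℝ → ℝ≥0∞) (-a) from hmInd.comp measurable_neg)]
    have hA : (∫⁻ y, s.indicator (1 : ℝ → ℝ≥0∞) y ∂μ) = μ s := by
      rw [lintegral_indicator hs]
      simp
    have hB : (∫⁻ y, s.indicator (1 : ℝ → ℝ≥0∞) (-y) ∂μ) = μ s := by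
      have hmap := lintegral_map (μ := μ) hmInd (measurable_neg : Measurable fun y : ℝ => -y)
      rw [hμsym] at hmap
      rw [← hmap, lintegral_indicator hs]
      simp
    rw [hA, hB, ← add_mul, ENNReal.add_halves, one_mul]
  · -- not β-biased for β > 1/2
    intro β hβ hcon
    unfold IsBiasedAround IsBiased IsMixtureOf at hcon
    obtain ⟨ρ, hρ, κ, hκ, hP, hbind⟩ := hcon
    rw [← hμdef] at hbind
    have hsy : μ (Ioi 0) = μ (Iio 0) := by
      conv_lhs => rw [← hμsym]
      rw [Measure.map_apply measurable_neg measurableSet_Ioi]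
      congr 1
      ext y
      simp
    have hle : μ (Iio 0) ≤ ENNReal.ofReal ((1 - β) / β) * μ (Iio 0) := by
      calc μ (Iio 0) = ∫⁻ z, κ z (Iio 0) ∂ρ := by
            rw [hbind, Measure.bind_apply measurableSet_Iio κ.measurable.aemeasurable]
        _ ≤ ∫⁻ z, ENNReal.ofReal ((1 - β) / β) * κ z (Ioi 0) ∂ρ :=
            lintegral_mono fun z => atomic_biased_ineq hβ (hP z)
        _ = ENNReal.ofReal ((1 - β) / β) * ∫⁻ z, κ z (Ioi 0) ∂ρ :=
            lintegral_const_mul _ (κ.measurable_coe measurableSet_Ioi)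
        _ = ENNReal.ofReal ((1 - β) / β) * μ (Ioi 0) := by
            rw [hbind, Measure.bind_apply measurableSet_Ioi κ.measurable.aemeasurable]
        _ = _ := by rw [hsy]
    have hβ0 : (0 : ℝ) < β := by linarith
    have hIio : μ (Iio 0) = 0 := by
      by_contra h0
      have hlt : ENNReal.ofReal ((1 - β) / β) * μ (Iio 0) < 1 * μ (Iio 0) := by
        refine ENNReal.mul_lt_mul_left h0 (measure_ne_top μ _) ?_
        rw [ENNReal.ofReal_lt_one, div_lt_one hβ0]
        linarith
      rw [one_mul] at hlt
      exact absurd hle (not_le.mpr hlt)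
    have hIoi : μ (Ioi 0) = 0 := hsy.trans hIio
    have hcompl : μ ({(0 : ℝ)}ᶜ) = 0 := by
      have hU : ({(0 : ℝ)}ᶜ : Set ℝ) = Iio 0 ∪ Ioi 0 := by
        ext y
        simp only [mem_compl_iff, mem_singleton_iff, mem_union, mem_Iio, mem_Ioi]
        exact ne_iff_lt_or_gt
      rw [hU]
      exact le_antisymm ((measure_union_le _ _).trans
        (by rw [hIio, hIoi, add_zero])) zero_le
    have hν0 : ν ({x}ᶜ) = 0 := by
      have h := hcompl
      rw [hμdef, Measure.map_apply hmx (measurableSet_singleton (0 : ℝ)).compl] at h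
      have hpre : (fun y : ℝ => y - x) ⁻¹' ({(0 : ℝ)}ᶜ) = ({x}ᶜ : Set ℝ) := by
        ext y
        simp [sub_eq_zero]
      rwa [hpre] at h
    apply hne
    have hx1 : ν {x} = 1 := (prob_compl_eq_zero_iff (measurableSet_singleton x)).mp hν0
    refine Measure.ext fun s hs => ?_
    rw [Measure.dirac_apply' _ hs]
    rcases Classical.em (x ∈ s) with hxs | hxs
    · have h1 : ν (s \ {x}) = 0 := measure_mono_null (fun y hy => hy.2) hν0
      have h2 : ν s = ν (s ∩ {x}) + ν (s \ {x}) :=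
        (measure_inter_add_diff s (measurableSet_singleton x)).symm
      rw [h2, h1, add_zero, inter_eq_self_of_subset_right (singleton_subset_iff.mpr hxs),
        hx1]
      simp [hxs]
    · have h3 : ν s = 0 := by
        refine measure_mono_null (fun y hy => ?_) hν0
        simp only [mem_compl_iff, mem_singleton_iff]
        rintro rfl
        exact hxs hy
      rw [h3]
      simp [indicator_of_notMem hxs]

end
end

section
/- Let ν ∈ 𝒫₁(ℝ) with s(ν) := inf supp(ν) > −∞ and S(ν) := sup supp(ν) = +∞. Then for every β ∈ (0,1), ν is not β-biased around its barycenter. -/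
open MeasureTheory ProbabilityTheory Set

noncomputable section

lemma null_of_not_msupp (ν : Measure ℝ) (U : Set ℝ) (h : ∀ x ∈ U, x ∉ msupp ν) :
    ν U = 0 := by
  have hball : ∀ x : U, ∃ ε > 0, ν (Metric.ball (x : ℝ) ε) = 0 := by
    intro x
    have := h x x.2
    simp only [msupp, mem_setOf_eq, not_forall] at this
    obtain ⟨ε, hε, hν⟩ := this
    exact ⟨ε, hε, by simpa using hν⟩
  choose ε hε hν using hball
  obtain ⟨T, hTc, hTU⟩ := TopologicalSpace.isOpen_iUnion_countable
    (fun x : U => Metric.ball (x : ℝ) (ε x)) (fun x => Metric.isOpen_ball)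
  have hsub : U ⊆ ⋃ x ∈ T, Metric.ball (x : ℝ) (ε x) := by
    rw [hTU]
    intro y hy
    exact mem_iUnion.2 ⟨⟨y, hy⟩, Metric.mem_ball_self (hε ⟨y, hy⟩)⟩
  refine le_antisymm ?_ zero_le
  calc ν U ≤ ν (⋃ x ∈ T, Metric.ball (x : ℝ) (ε x)) := measure_mono hsub
    _ = 0 := measure_biUnion_null_iff hTc |>.2 fun x _ => hν x

lemma atomic_bound {β m : ℝ} (hβ0 : 0 < β) (hβ1 : β < 1) (hm : m ≤ 0)
    (μ : Measure ℝ) (h : IsAtomicBiased β μ) (hlow : μ (Iio m) = 0) :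
    μ (Ioi ((-m) * (1 - β) / β)) = 0 := by
  obtain ⟨hP, hI, hmean, hbdd, hatom⟩ := h
  set S := Ssup μ with hS
  set p := (μ {S}).toReal with hp
  have hμS_le : μ {S} ≤ 1 := prob_le_one
  have hμS_ne : μ {S} ≠ ⊤ := (lt_of_le_of_lt hμS_le ENNReal.one_lt_top).ne
  have hβp : β ≤ p := by
    have := ENNReal.toReal_mono hμS_ne hatom
    rwa [ENNReal.toReal_ofReal hβ0.le] at this
  have hp1 : p ≤ 1 := by
    have := ENNReal.toReal_mono (by simp) hμS_le
    simpa using this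
  -- μ (Ioi S) = 0
  have hIoiS : μ (Ioi S) = 0 := by
    apply null_of_not_msupp
    intro x hx hmem
    exact absurd (le_csSup hbdd hmem) (not_le.2 hx)
  -- integral over {S}
  have hres : μ.restrict {S} = μ {S} • Measure.dirac S := Measure.restrict_singleton _ _
  have hintS : ∫ x in {S}, x ∂μ = p * S := by
    rw [hres, integral_smul_measure, integral_dirac]
    rfl
  -- a.e. m ≤ x
  have hae : ∀ᵐ x ∂μ, m ≤ x := by
    rw [ae_iff]
    convert hlow using 2
    ext x; simp [not_le]
  have hcompl_meas : (μ {S}ᶜ).toReal = 1 - p := by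
    rw [measure_compl (measurableSet_singleton S) hμS_ne, measure_univ,
      ENNReal.toReal_sub_of_le hμS_le (by simp)]
    simp [hp]
  have hintC : m * (1 - p) ≤ ∫ x in {S}ᶜ, x ∂μ := by
    have h1 : ∫ _x in {S}ᶜ, m ∂μ ≤ ∫ x in {S}ᶜ, x ∂μ := by
      apply integral_mono_ae (integrable_const m) (hI.restrict)
      exact ae_restrict_of_ae hae
    rw [integral_const, measureReal_restrict_apply_univ, measureReal_def, hcompl_meas, smul_eq_mul,
      mul_comm] at h1
    exact h1
  have hsplit : p * S + ∫ x in {S}ᶜ, x ∂μ = 0 := by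
    have := integral_add_compl (measurableSet_singleton S) hI
    simp only [id] at this
    rw [← hintS, this, hmean]
  have hkey : S * p ≤ (-m) * (1 - p) := by nlinarith [hintC, hsplit]
  have hSK : S ≤ (-m) * (1 - β) / β := by
    rw [le_div_iff₀ hβ0]
    rcases le_or_gt 0 S with hS0 | hS0
    · nlinarith
    · nlinarith
  refine le_antisymm ?_ zero_le
  calc μ (Ioi ((-m) * (1 - β) / β)) ≤ μ (Ioi S) := measure_mono fun x hx => lt_of_le_of_lt hSK hx
    _ = 0 := hIoiS


/-- if `s(ν) > -∞` and `S(ν) = +∞` then `ν` is not `β`-biased around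
its barycenter for any `β ∈ (0,1)`. -/
theorem stmt8 (ν : Measure ℝ) (hprob : IsProbabilityMeasure ν)
    (hint : Integrable id ν) (hbdd : BddBelow (msupp ν))
    (hub : ¬ BddAbove (msupp ν)) :
    ∀ β : ℝ, β ∈ Set.Ioo (0 : ℝ) 1 → ¬ IsBiasedAround β (∫ y, y ∂ν) ν := by
  rintro β ⟨hβ0, hβ1⟩ hbias
  set b := ∫ y, y ∂ν with hb
  obtain ⟨ρ, hρ, κ, hκ, hall, hbind⟩ := hbias
  obtain ⟨c, hc⟩ := hbdd
  set m := min (c - b) 0 with hmdef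
  have hm : m ≤ 0 := min_le_right _ _
  have hmap : ∀ s : Set ℝ, MeasurableSet s →
      ν.map (fun y => y - b) s = ν ((fun y => y - b) ⁻¹' s) := fun s hs =>
    Measure.map_apply (measurable_id.sub_const b) hs
  -- lower tail is null
  have hlow : ν.map (fun y => y - b) (Iio m) = 0 := by
    rw [hmap _ measurableSet_Iio]
    have hpre : (fun y => y - b) ⁻¹' Iio m = Iio (m + b) := by
      ext y; simp [sub_lt_iff_lt_add]
    rw [hpre]
    apply null_of_not_msupp
    intro x hx hmem
    have hcx := hc hmem
    have : m + b ≤ c := by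
      have : m ≤ c - b := min_le_left _ _
      linarith
    exact absurd (lt_of_lt_of_le hx this) (not_lt.2 hcx)
  -- a.e. kernel lower tail null
  have hlow' : ∀ᵐ a ∂ρ, κ a (Iio m) = 0 := by
    have hb' : ρ.bind (fun x => κ x) (Iio m) = ∫⁻ a, κ a (Iio m) ∂ρ :=
      Measure.bind_apply measurableSet_Iio (κ.measurable.aemeasurable)
    rw [hbind, hb'] at hlow
    exact (lintegral_eq_zero_iff (κ.measurable_coe measurableSet_Iio)).1 hlow
  set K := (-m) * (1 - β) / β with hK
  have hup : ∀ᵐ a ∂ρ, κ a (Ioi K) = 0 := by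
    filter_upwards [hlow'] with a ha
    exact atomic_bound hβ0 hβ1 hm (κ a) (hall a) ha
  have hνK : ν (Ioi (K + b)) = 0 := by
    have hb' : ρ.bind (fun x => κ x) (Ioi K) = ∫⁻ a, κ a (Ioi K) ∂ρ :=
      Measure.bind_apply measurableSet_Ioi (κ.measurable.aemeasurable)
    have h0 : ν.map (fun y => y - b) (Ioi K) = 0 := by
      rw [hbind, hb', lintegral_congr_ae hup, lintegral_zero]
    rw [hmap _ measurableSet_Ioi] at h0
    have hpre : (fun y => y - b) ⁻¹' Ioi K = Ioi (K + b) := by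
      ext y; simp [lt_sub_iff_add_lt]
    rwa [hpre] at h0
  apply hub
  refine ⟨K + b, fun x hx => ?_⟩
  by_contra hxK
  push_neg at hxK
  have hball : Metric.ball x (x - (K + b)) ⊆ Ioi (K + b) := by
    intro y hy
    rw [Metric.mem_ball, Real.dist_eq, abs_lt] at hy
    have := hy.1
    simp only [mem_Ioi]
    linarith
  have h1 : 0 < ν (Metric.ball x (x - (K + b))) := hx _ (by linarith)
  have h2 : ν (Metric.ball x (x - (K + b))) ≤ 0 := hνK ▸ measure_mono hball
  exact absurd h2 (not_le.2 h1)

end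
end
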